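/- Let h ∈ L^{4/3}(ℝ³) be nonnegative and suppose there is a constant c such that for all x₀ ∈ ℝ³ and R > 0, (1/|B(R/2)|) ∫_{B(x₀,R/2)} h^{4/3} dx ≤ c ( (1/|B(R)|) ∫_{B(x₀,R)} h dx )^{4/3}. Then h = 0 almost everywhere. -/

import Mathlib

open MeasureTheory Metric Real Filter

open Topology

noncomputable section

abbrev E3 := EuclideanSpace ℝ (Fin 3)

/-- The `i`-th standard basis vector of `ℝ³`. -/
def e3 (i : Fin 3) : E3 := EuclideanSpace.single i 1

/-- A vector field is divergence free. -/
def DivFree (u : E3 → E3) : Prop := ∀ x, ∑ i, fderiv ℝ u x (e3 i) i = 0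

/-- A matrix-valued field is skew-symmetric. -/
def Skew (d : E3 → Fin 3 → Fin 3 → ℝ) : Prop := ∀ x i j, d x i j = - d x j i

/-- A (matrix-valued) field has bounded mean oscillation. -/
def IsBMO (d : E3 → Fin 3 → Fin 3 → ℝ) : Prop :=
  (∀ (x₀ : E3) (r : ℝ), IntegrableOn d (ball x₀ r) volume) ∧
  ∃ C : ℝ, ∀ (x₀ : E3) (r : ℝ), 0 < r →
    (volume (ball x₀ r)).toReal⁻¹ *
      ∫ x in ball x₀ r, ‖d x - ⨍ y in ball x₀ r, d y‖ ≤ C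

/-- `u = div d`, i.e. `u_i = d_{ij,j}`. -/
def IsDivOf (d : E3 → Fin 3 → Fin 3 → ℝ) (u : E3 → E3) : Prop :=
  ∀ x i, u x i = ∑ j, fderiv ℝ d x (e3 j) i j

/-- Stationary Navier–Stokes: `u·∇u − Δu = ∇p` componentwise. -/
def NSE (u : E3 → E3) (p : E3 → ℝ) : Prop :=
  ∀ x i, fderiv ℝ u x (u x) i
    - ∑ j, fderiv ℝ (fun y => fderiv ℝ u y (e3 j) i) x (e3 j)
    = fderiv ℝ p x (e3 i)

lemma aux_add_rpow {a b p : ℝ} (ha : 0 ≤ a) (hb : 0 ≤ b) (hp : 0 ≤ p) :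
    (a + b) ^ p ≤ 2 ^ p * (a ^ p + b ^ p) := by
  have h2 : (0:ℝ) ≤ 2 ^ p := Real.rpow_nonneg (by norm_num) p
  rcases le_total a b with hab | hab
  · calc (a+b)^p ≤ (2*b)^p := Real.rpow_le_rpow (by linarith) (by linarith) hp
      _ = 2^p * b^p := Real.mul_rpow (by norm_num) hb
      _ ≤ 2^p * (a^p + b^p) :=
        mul_le_mul_of_nonneg_left (le_add_of_nonneg_left (Real.rpow_nonneg ha p)) h2
  · calc (a+b)^p ≤ (2*a)^p := Real.rpow_le_rpow (by linarith) (by linarith) hp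
      _ = 2^p * a^p := Real.mul_rpow (by norm_num) ha
      _ ≤ 2^p * (a^p + b^p) :=
        mul_le_mul_of_nonneg_left (le_add_of_nonneg_right (Real.rpow_nonneg hb p)) h2

/-- A nonnegative `L^{4/3}` function satisfying a global reverse Hölder inequality
on all balls vanishes a.e. -/
theorem stmt6 (h : E3 → ℝ) (hpos : ∀ x, 0 ≤ h x)
    (hmem : MemLp h (ENNReal.ofReal (4 / 3)) volume) (c : ℝ)
    (hrh : ∀ (x₀ : E3) (R : ℝ), 0 < R →
      (volume (ball x₀ (R / 2))).toReal⁻¹ *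
          ∫ x in ball x₀ (R / 2), h x ^ ((4 : ℝ) / 3) ≤
        c * ((volume (ball x₀ R)).toReal⁻¹ * ∫ x in ball x₀ R, h x) ^ ((4 : ℝ) / 3)) :
    h =ᵐ[volume] 0 := by
  have hfnn : ∀ x, 0 ≤ h x ^ ((4:ℝ)/3) := fun x => Real.rpow_nonneg (hpos x) _
  have hfint : Integrable (fun x => h x ^ ((4:ℝ)/3)) volume := by
    have h1 := hmem.integrable_norm_rpow (by simp) (by simp)
    rw [ENNReal.toReal_ofReal (by norm_num : ((0:ℝ)) ≤ 4/3)] at h1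
    refine h1.congr (ae_of_all _ fun x => ?_)
    simp [Real.norm_of_nonneg (hpos x)]
  suffices hI : ∫ x, h x ^ ((4:ℝ)/3) = 0 by
    have h0 := (integral_eq_zero_iff_of_nonneg hfnn hfint).mp hI
    filter_upwards [h0] with x hx
    have hx' : h x ^ ((4:ℝ)/3) = 0 := hx
    have : h x = (h x ^ ((4:ℝ)/3)) ^ ((3:ℝ)/4) := by
      rw [← Real.rpow_mul (hpos x)]; norm_num
    rw [hx'] at this
    simpa [Real.zero_rpow] using this
  refine le_antisymm ?_ (integral_nonneg hfnn)
  set I := ∫ x, h x ^ ((4:ℝ)/3) with hIdef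
  have hInn : 0 ≤ I := integral_nonneg hfnn
  set c' := max c 0 with hc'
  have hc'0 : 0 ≤ c' := le_max_right _ _
  set K := c' * 2 ^ ((4:ℝ)/3) / 8 with hK
  have hK0 : 0 ≤ K := by
    have : (0:ℝ) ≤ 2 ^ ((4:ℝ)/3) := Real.rpow_nonneg (by norm_num) _
    positivity
  suffices key : ∀ ε : ℝ, 0 < ε → I ≤ K * ε by
    rcases eq_or_lt_of_le hK0 with hK0' | hKpos
    · have := key 1 one_pos
      simpa [← hK0'] using this
    · refine le_of_forall_pos_le_add fun ε' hε' => ?_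
      have hk := key (ε'/K) (by positivity)
      rw [mul_comm, div_mul_cancel₀ _ hKpos.ne'] at hk
      linarith
  intro ε hε
  -- volume facts
  have hκball : ∀ (x : E3) (r : ℝ), 0 ≤ r →
      volume (ball x r) = ENNReal.ofReal (r ^ 3) * volume (ball (0:E3) 1) := by
    intro x r hr
    have := Measure.addHaar_ball (volume : Measure E3) x hr
    rwa [finrank_euclideanSpace_fin] at this
  set κ := (volume (ball (0:E3) 1)).toReal with hκ1
  have hκpos : 0 < κ :=
    ENNReal.toReal_pos (measure_ball_pos _ _ one_pos).ne' measure_ball_lt_top.ne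
  have hV : ∀ (x : E3) (r : ℝ), 0 ≤ r → (volume (ball x r)).toReal = r^3 * κ := by
    intro x r hr
    rw [hκball x r hr, ENNReal.toReal_mul, ENNReal.toReal_ofReal (by positivity)]
  have hVfin : ∀ (x : E3) (r : ℝ), volume (ball x r) < ⊤ := fun x r => measure_ball_lt_top
  -- integrability of h on finite measure sets
  have hhint : ∀ s : Set E3, volume s ≠ ⊤ → IntegrableOn h s volume := by
    intro s hs
    haveI : IsFiniteMeasure (volume.restrict s) :=
      ⟨by rwa [Measure.restrict_apply_univ, lt_top_iff_ne_top]⟩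
    refine memLp_one_iff_integrable.mp ((hmem.restrict s).mono_exponent ?_)
    rw [show (1:ENNReal) = ENNReal.ofReal 1 by simp]
    exact ENNReal.ofReal_le_ofReal (by norm_num)
  -- Hölder on finite measure sets
  have holder : ∀ s : Set E3, volume s ≠ ⊤ →
      ∫ x in s, h x ≤ (∫ x in s, h x ^ ((4:ℝ)/3)) ^ ((3:ℝ)/4) * (volume s).toReal ^ ((1:ℝ)/4) := by
    intro s hs
    haveI : IsFiniteMeasure (volume.restrict s) :=
      ⟨by rwa [Measure.restrict_apply_univ, lt_top_iff_ne_top]⟩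
    have hpq : ((4:ℝ)/3).HolderConjugate 4 := Real.holderConjugate_iff.mpr ⟨by norm_num, by norm_num⟩
    have H := integral_mul_le_Lp_mul_Lq_of_nonneg (μ := volume.restrict s) hpq
      (f := h) (g := fun _ => (1:ℝ)) (ae_of_all _ hpos) (ae_of_all _ fun _ => zero_le_one)
      (hmem.restrict s) (memLp_const 1)
    simp only [mul_one, Real.one_rpow, integral_const, Measure.restrict_apply_univ,
      smul_eq_mul] at H
    have e1 : (1:ℝ)/((4:ℝ)/3) = 3/4 := by norm_num
    rwa [e1, measureReal_def, Measure.restrict_apply_univ] at H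
  -- convergence of integrals over balls
  have htend : Tendsto (fun n : ℕ => ∫ x in ball (0:E3) n, h x ^ ((4:ℝ)/3)) atTop (𝓝 I) := by
    have := tendsto_setIntegral_of_monotone (μ := volume)
      (s := fun n : ℕ => ball (0:E3) n) (f := fun x => h x ^ ((4:ℝ)/3))
      (fun _ => measurableSet_ball)
      (fun i j hij => ball_subset_ball (by exact_mod_cast hij))
      (by rw [iUnion_ball_nat]; exact hfint.integrableOn)
    rwa [iUnion_ball_nat, setIntegral_univ] at this
  obtain ⟨r₀, hr₀⟩ : ∃ r₀ : ℕ, I - ε < ∫ x in ball (0:E3) r₀, h x ^ ((4:ℝ)/3) :=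
    (htend.eventually (eventually_gt_nhds (by linarith))).exists
  set A := ∫ x in ball (0:E3) (r₀:ℝ), h x with hA
  have hAnn : 0 ≤ A := setIntegral_nonneg measurableSet_ball fun x _ => hpos x
  -- tail estimate
  have htail : ∀ t : Set E3, MeasurableSet t → t ⊆ (ball (0:E3) (r₀:ℝ))ᶜ →
      ∫ x in t, h x ^ ((4:ℝ)/3) ≤ ε := by
    intro t ht hsub
    have hdisj : Disjoint (ball (0:E3) (r₀:ℝ)) t :=
      Set.subset_compl_iff_disjoint_left.mp hsub
    have heq := setIntegral_union hdisj ht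
      (hfint.integrableOn (s := ball (0:E3) (r₀:ℝ))) (hfint.integrableOn (s := t))
    have hle : ∫ x in ball (0:E3) (r₀:ℝ) ∪ t, h x ^ ((4:ℝ)/3) ≤ I :=
      setIntegral_le_integral hfint (ae_of_all _ hfnn)
    rw [heq] at hle
    linarith
  -- main per-n bound
  have key : ∀ n : ℕ, r₀ + 1 ≤ n →
      ∫ x in ball (0:E3) (n:ℝ), h x ^ ((4:ℝ)/3) ≤
        K * A ^ ((4:ℝ)/3) * (((2*(n:ℝ))^3*κ) ^ ((1:ℝ)/3))⁻¹ + K * ε := by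
    intro n hn
    have hn1 : (1:ℝ) ≤ (n:ℝ) := by exact_mod_cast Nat.one_le_iff_ne_zero.mpr (by omega)
    have hnpos : (0:ℝ) < (n:ℝ) := by linarith
    have hr0n : (r₀:ℝ) ≤ 2*(n:ℝ) := by
      have : (r₀:ℝ) ≤ (n:ℝ) := by exact_mod_cast (by omega : r₀ ≤ n)
      linarith
    have hRpos : (0:ℝ) < 2*(n:ℝ) := by linarith
    have hmain := hrh 0 (2*(n:ℝ)) hRpos
    rw [show (2*(n:ℝ))/2 = (n:ℝ) by ring] at hmain
    set W := (volume (ball (0:E3) (2*(n:ℝ)))).toReal with hWd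
    set Vn := (volume (ball (0:E3) ((n:ℝ)))).toReal with hVnd
    have hWval : W = (2*(n:ℝ))^3*κ := hV 0 _ hRpos.le
    have hVnval : Vn = (n:ℝ)^3*κ := hV 0 _ hnpos.le
    have hWpos : 0 < W := by rw [hWval]; positivity
    have hVnpos : 0 < Vn := by rw [hVnval]; positivity
    have hW8 : W = 8 * Vn := by rw [hWval, hVnval]; ring
    have hIhnn : 0 ≤ ∫ x in ball (0:E3) (2*(n:ℝ)), h x :=
      setIntegral_nonneg measurableSet_ball fun x _ => hpos x
    have hBnn : 0 ≤ ε ^ ((3:ℝ)/4) * W ^ ((1:ℝ)/4) :=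
      mul_nonneg (Real.rpow_nonneg hε.le _) (Real.rpow_nonneg hWpos.le _)
    -- split the integral of h over the big ball
    have hsplit : ∫ x in ball (0:E3) (2*(n:ℝ)), h x ≤ A + ε ^ ((3:ℝ)/4) * W ^ ((1:ℝ)/4) := by
      have hsub : ball (0:E3) (r₀:ℝ) ⊆ ball (0:E3) (2*(n:ℝ)) := ball_subset_ball hr0n
      set t := ball (0:E3) (2*(n:ℝ)) \ ball (0:E3) (r₀:ℝ) with ht
      have htm : MeasurableSet t := measurableSet_ball.diff measurableSet_ball
      have htfin : volume t ≠ ⊤ :=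
        ((measure_mono Set.diff_subset).trans_lt (hVfin 0 _)).ne
      have hdisj : Disjoint (ball (0:E3) (r₀:ℝ)) t := Set.disjoint_sdiff_right
      have heq : ∫ x in ball (0:E3) (2*(n:ℝ)), h x = A + ∫ x in t, h x := by
        rw [← Set.union_diff_cancel hsub]
        exact setIntegral_union hdisj htm (hhint _ (hVfin 0 _).ne) (hhint _ htfin)
      have htailb : ∫ x in t, h x ^ ((4:ℝ)/3) ≤ ε := htail t htm (fun x hx => hx.2)
      have hHo := holder t htfin
      have h34 : (∫ x in t, h x ^ ((4:ℝ)/3)) ^ ((3:ℝ)/4) ≤ ε ^ ((3:ℝ)/4) :=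
        Real.rpow_le_rpow (setIntegral_nonneg htm fun x _ => hfnn x) htailb (by norm_num)
      have hvol : (volume t).toReal ^ ((1:ℝ)/4) ≤ W ^ ((1:ℝ)/4) := by
        refine Real.rpow_le_rpow ENNReal.toReal_nonneg ?_ (by norm_num)
        rw [hWd]
        exact (ENNReal.toReal_le_toReal htfin (hVfin 0 _).ne).mpr
          (measure_mono Set.diff_subset)
      have h5 : ∫ x in t, h x ≤ ε ^ ((3:ℝ)/4) * W ^ ((1:ℝ)/4) :=
        hHo.trans (mul_le_mul h34 hvol (Real.rpow_nonneg ENNReal.toReal_nonneg _)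
          (Real.rpow_nonneg hε.le _))
      rw [heq]
      linarith
    -- pass to c' = max c 0
    have hXnn : 0 ≤ W⁻¹ * ∫ x in ball (0:E3) (2*(n:ℝ)), h x :=
      mul_nonneg (inv_nonneg.mpr hWpos.le) hIhnn
    have hmain' : Vn⁻¹ * ∫ x in ball (0:E3) ((n:ℝ)), h x ^ ((4:ℝ)/3) ≤
        c' * (W⁻¹ * ∫ x in ball (0:E3) (2*(n:ℝ)), h x) ^ ((4:ℝ)/3) :=
      hmain.trans (mul_le_mul_of_nonneg_right (le_max_left c 0) (Real.rpow_nonneg hXnn _))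
    have hstep2 : (W⁻¹ * ∫ x in ball (0:E3) (2*(n:ℝ)), h x) ^ ((4:ℝ)/3) ≤
        (W⁻¹ * (A + ε ^ ((3:ℝ)/4) * W ^ ((1:ℝ)/4))) ^ ((4:ℝ)/3) :=
      Real.rpow_le_rpow hXnn
        (mul_le_mul_of_nonneg_left hsplit (inv_nonneg.mpr hWpos.le)) (by norm_num)
    have hvne : W ^ ((1:ℝ)/3) ≠ 0 := (Real.rpow_pos_of_pos hWpos _).ne'
    have halg : (W⁻¹ * (A + ε ^ ((3:ℝ)/4) * W ^ ((1:ℝ)/4))) ^ ((4:ℝ)/3) ≤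
        2 ^ ((4:ℝ)/3) * (A ^ ((4:ℝ)/3) * (W ^ ((1:ℝ)/3) * W)⁻¹ + ε * W⁻¹) := by
      have e1 : (W⁻¹ * (A + ε ^ ((3:ℝ)/4) * W ^ ((1:ℝ)/4))) ^ ((4:ℝ)/3)
          = (W⁻¹) ^ ((4:ℝ)/3) * (A + ε ^ ((3:ℝ)/4) * W ^ ((1:ℝ)/4)) ^ ((4:ℝ)/3) :=
        Real.mul_rpow (inv_nonneg.mpr hWpos.le) (by linarith)
      have e2 : (ε ^ ((3:ℝ)/4) * W ^ ((1:ℝ)/4)) ^ ((4:ℝ)/3) = ε * W ^ ((1:ℝ)/3) := by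
        rw [Real.mul_rpow (Real.rpow_nonneg hε.le _) (Real.rpow_nonneg hWpos.le _),
          ← Real.rpow_mul hε.le, ← Real.rpow_mul hWpos.le]
        norm_num
      have e3 : W ^ ((4:ℝ)/3) = W ^ ((1:ℝ)/3) * W := by
        rw [show (4:ℝ)/3 = 1/3 + 1 by norm_num, Real.rpow_add hWpos, Real.rpow_one]
      have e4 : (W⁻¹) ^ ((4:ℝ)/3) = (W ^ ((1:ℝ)/3) * W)⁻¹ := by
        rw [Real.inv_rpow hWpos.le, e3]
      have haux := aux_add_rpow hAnn hBnn (by norm_num : (0:ℝ) ≤ 4/3)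
      rw [e2] at haux
      calc (W⁻¹ * (A + ε ^ ((3:ℝ)/4) * W ^ ((1:ℝ)/4))) ^ ((4:ℝ)/3)
          = (W ^ ((1:ℝ)/3) * W)⁻¹ * (A + ε ^ ((3:ℝ)/4) * W ^ ((1:ℝ)/4)) ^ ((4:ℝ)/3) := by
            rw [e1, e4]
        _ ≤ (W ^ ((1:ℝ)/3) * W)⁻¹ * (2 ^ ((4:ℝ)/3) * (A ^ ((4:ℝ)/3) + ε * W ^ ((1:ℝ)/3))) :=
            mul_le_mul_of_nonneg_left haux
              (inv_nonneg.mpr (mul_nonneg (Real.rpow_nonneg hWpos.le _) hWpos.le))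
        _ = 2 ^ ((4:ℝ)/3) * (A ^ ((4:ℝ)/3) * (W ^ ((1:ℝ)/3) * W)⁻¹ + ε * W⁻¹) := by
            field_simp
    -- combine
    have h6 : Vn⁻¹ * ∫ x in ball (0:E3) ((n:ℝ)), h x ^ ((4:ℝ)/3) ≤
        c' * (2 ^ ((4:ℝ)/3) * (A ^ ((4:ℝ)/3) * (W ^ ((1:ℝ)/3) * W)⁻¹ + ε * W⁻¹)) :=
      hmain'.trans (mul_le_mul_of_nonneg_left (hstep2.trans halg) hc'0)
    have h7 : ∫ x in ball (0:E3) ((n:ℝ)), h x ^ ((4:ℝ)/3) ≤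
        Vn * (c' * (2 ^ ((4:ℝ)/3) * (A ^ ((4:ℝ)/3) * (W ^ ((1:ℝ)/3) * W)⁻¹ + ε * W⁻¹))) := by
      have := mul_le_mul_of_nonneg_left h6 hVnpos.le
      rwa [← mul_assoc, mul_inv_cancel₀ hVnpos.ne', one_mul] at this
    refine h7.trans (le_of_eq ?_)
    rw [← hWval]
    have hVn8 : Vn = W / 8 := by rw [hW8]; ring
    rw [hVn8, hK]
    field_simp
  -- limit
  have hlim : Tendsto (fun n : ℕ =>
      K * A ^ ((4:ℝ)/3) * (((2*(n:ℝ))^3*κ) ^ ((1:ℝ)/3))⁻¹ + K * ε) atTop (𝓝 (K * ε)) := by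
    have ha : Tendsto (fun n : ℕ => 2*(n:ℝ)) atTop atTop :=
      tendsto_natCast_atTop_atTop.const_mul_atTop two_pos
    have hb : Tendsto (fun n : ℕ => (2*(n:ℝ))^3) atTop atTop :=
      (tendsto_pow_atTop (by norm_num : (3:ℕ) ≠ 0)).comp ha
    have hc2 : Tendsto (fun n : ℕ => (2*(n:ℝ))^3*κ) atTop atTop :=
      hb.atTop_mul_const hκpos
    have h1 : Tendsto (fun n : ℕ => ((2*(n:ℝ))^3*κ) ^ ((1:ℝ)/3)) atTop atTop :=
      (tendsto_rpow_atTop (by norm_num : (0:ℝ) < 1/3)).comp hc2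
    have h2 : Tendsto (fun n : ℕ => (((2*(n:ℝ))^3*κ) ^ ((1:ℝ)/3))⁻¹) atTop (𝓝 0) :=
      h1.inv_tendsto_atTop
    have h3 := (h2.const_mul (K * A ^ ((4:ℝ)/3))).add_const (K*ε)
    simpa using h3
  have := le_of_tendsto_of_tendsto htend hlim (Filter.eventually_atTop.mpr ⟨r₀+1, key⟩)
  linarith
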